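/- Let q be a rational prime and let β ∈ ℂ be an algebraic integer with nonzero imaginary part whose minimal polynomial over ℚ has degree 2, and suppose β · β̄ = q, where β̄ denotes the complex conjugate of β. If β^{12h} is a rational number for some integer h ≥ 1, then β^{12} is a rational integer and β^{12} = q^6 or β^{12} = −q^6. -/

import Mathlib

open Polynomial


/-- If β is a quadratic nonreal algebraic integer with β·β̄ = q for a rational prime q,
and β^(12h) is rational for some h ≥ 1, then β^12 is a rational integer equal to ±q^6. -/
theorem weil_number_pow_twelve_int
    (q : ℕ) (hq : q.Prime) (β : ℂ)
    (hint : IsIntegral ℤ β)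
    (him : β.im ≠ 0)
    (hdeg : (minpoly ℚ β).natDegree = 2)
    (hnorm : β * (starRingEnd ℂ) β = (q : ℂ))
    (h : ℕ) (hh : 1 ≤ h)
    (hrat : ∃ r : ℚ, β ^ (12 * h) = (r : ℂ)) :
    (∃ m : ℤ, β ^ 12 = (m : ℂ)) ∧
      (β ^ 12 = (q : ℂ) ^ 6 ∨ β ^ 12 = -(q : ℂ) ^ 6) := by
  obtain ⟨r, hr⟩ := hrat
  have hqR : (0 : ℝ) < (q : ℝ) := by exact_mod_cast hq.pos
  have hqC : (q : ℂ) ≠ 0 := by exact_mod_cast hq.ne_zero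
  set c : ℂ := (starRingEnd ℂ) β with hc
  -- |β|^2 = q
  have habs : ‖β‖ ^ 2 = (q : ℝ) := by
    have h1 := Complex.mul_conj β
    rw [← hc, hnorm] at h1
    have h2 : Complex.normSq β = (q : ℝ) := by exact_mod_cast h1.symm
    rw [Complex.sq_norm, h2]
  -- α := β^2 / q
  set α : ℂ := β ^ 2 / (q : ℂ) with hα
  have habsr : ‖((r : ℝ) : ℂ)‖ = (q : ℝ) ^ (6 * h) := by
    have : ((r : ℝ) : ℂ) = (r : ℂ) := by push_cast; ring
    rw [this, ← hr, norm_pow]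
    calc ‖β‖ ^ (12 * h) = (‖β‖ ^ 2) ^ (6 * h) := by ring
    _ = (q : ℝ) ^ (6 * h) := by rw [habs]
  have hr2 : (r : ℂ) ^ 2 = (q : ℂ) ^ (12 * h) := by
    have h1 : ((r : ℝ)) ^ 2 = ((q : ℝ) ^ (6 * h)) ^ 2 := by
      rw [← habsr, Complex.norm_real, Real.norm_eq_abs, sq_abs]
    have h2 : ((r : ℝ)) ^ 2 = (q : ℝ) ^ (12 * h) := by rw [h1, ← pow_mul]; ring_nf
    have := congrArg (fun x : ℝ => (x : ℂ)) h2
    push_cast at this ⊢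
    exact this
  have hβpow : β ^ (2 * (12 * h)) = (q : ℂ) ^ (12 * h) := by
    rw [mul_comm 2, pow_mul, hr, hr2]
  have hαpow : α ^ (12 * h) = 1 := by
    rw [hα, div_pow, ← pow_mul, hβpow, div_self (pow_ne_zero _ hqC)]
  -- α is integral over ℤ, as is its conjugate
  have hintα : IsIntegral ℤ α := by
    refine ⟨X ^ (12 * h) - C 1, monic_X_pow_sub_C 1 (by omega), ?_⟩
    simp [hαpow]
  have hintα' : IsIntegral ℤ ((starRingEnd ℂ) α) :=
    IsIntegral.map ((starRingEnd ℂ).toIntAlgHom) hintα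
  -- trace of β is rational
  have hβQ : IsIntegral ℚ β := hint.tower_top
  have hp0 : aeval β (minpoly ℚ β) = 0 := minpoly.aeval ℚ β
  have hmon : (minpoly ℚ β).Monic := minpoly.monic hβQ
  have hcoeff2 : (minpoly ℚ β).coeff 2 = 1 := by
    have := hmon.coeff_natDegree
    rwa [hdeg] at this
  have hexp : ∀ z : ℂ, aeval z (minpoly ℚ β) =
      z ^ 2 + ((minpoly ℚ β).coeff 1 : ℂ) * z + ((minpoly ℚ β).coeff 0 : ℂ) := by
    intro z
    rw [aeval_eq_sum_range, hdeg]
    simp [Finset.sum_range_succ, hcoeff2, Rat.smul_def]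
    ring
  have hpc : aeval c (minpoly ℚ β) = 0 := by
    have h1 : aeval ((starRingEnd ℂ) β) (minpoly ℚ β) =
        (starRingEnd ℂ) (aeval β (minpoly ℚ β)) :=
      aeval_algHom_apply ((starRingEnd ℂ).toRatAlgHom) β (minpoly ℚ β)
    rw [hp0, map_zero] at h1
    exact h1
  have e1 := hp0; rw [hexp] at e1
  have e2 := hpc; rw [hexp] at e2
  have hβc : β - c ≠ 0 := by
    rw [hc, Complex.sub_conj]
    simp [Complex.ext_iff, him]
  set t : ℚ := -(minpoly ℚ β).coeff 1 with htdef
  have ht : β + c = (t : ℂ) := by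
    have hmul : (β - c) * (β + c + ((minpoly ℚ β).coeff 1 : ℂ)) = 0 := by
      linear_combination e1 - e2
    have h2 := (mul_eq_zero.mp hmul).resolve_left hβc
    push_cast [htdef]
    linear_combination h2
  -- s := α + conj α is rational
  set s : ℚ := (t ^ 2 - 2 * q) / q with hsdef
  have hcα : (starRingEnd ℂ) α = c ^ 2 / (q : ℂ) := by
    rw [hα, map_div₀, map_pow, ← hc]
    norm_num
  have key : β ^ 2 + c ^ 2 = (t : ℂ) ^ 2 - 2 * (q : ℂ) := by
    linear_combination (β + c + (t : ℂ)) * ht - 2 * hnorm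
  have hs : α + (starRingEnd ℂ) α = (s : ℂ) := by
    rw [hcα, hα, ← add_div, key, hsdef]
    push_cast
    ring
  -- s is an integer
  have hsint : IsIntegral ℤ s := by
    have h1 : IsIntegral ℤ ((s : ℂ)) := hs ▸ (hintα.add hintα')
    have h2 : (algebraMap ℚ ℂ) s = (s : ℂ) := eq_ratCast (algebraMap ℚ ℂ) s
    exact (isIntegral_algebraMap_iff (algebraMap ℚ ℂ).injective).mp (h2 ▸ h1)
  obtain ⟨m, hm⟩ := IsIntegrallyClosed.isIntegral_iff.mp hsint
  have hm' : (m : ℚ) = s := hm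
  -- |α| = 1 and the bound |m| ≤ 2
  have habsα : ‖α‖ = 1 := by
    rw [hα, norm_div, norm_pow, habs, Complex.norm_natCast, div_self (ne_of_gt hqR)]
  have hre : (s : ℝ) = 2 * α.re := by
    have h1 : ((s : ℝ) : ℂ) = ((2 * α.re : ℝ) : ℂ) := by
      rw [← Complex.add_conj, hs]; push_cast; ring
    exact_mod_cast h1
  have hmb : -2 ≤ m ∧ m ≤ 2 := by
    have h1 : |α.re| ≤ 1 := habsα ▸ Complex.abs_re_le_norm α
    have h2 : |(s : ℝ)| ≤ 2 := by rw [hre, abs_mul]; simp; nlinarith [abs_nonneg α.re]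
    have h3 : |(m : ℝ)| ≤ 2 := by rw [show ((m : ℝ)) = ((s : ℝ)) by exact_mod_cast hm']; exact h2
    have h4 : |m| ≤ 2 := by exact_mod_cast h3
    exact abs_le.mp h4
  -- the quadratic relation
  have hαc : α * (starRingEnd ℂ) α = 1 := by
    rw [Complex.mul_conj, Complex.normSq_eq_norm_sq, habsα]
    norm_num
  have hmC : α + (starRingEnd ℂ) α = (m : ℂ) := by
    rw [hs]; exact_mod_cast congrArg (fun x : ℚ => (x : ℂ)) hm'.symm
  have hquad : α ^ 2 - (m : ℂ) * α + 1 = 0 := by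
    linear_combination α * hmC - hαc
  -- α^12 = 1
  have hα12 : α ^ 12 = 1 := by
    obtain ⟨hm1, hm2⟩ := hmb
    interval_cases m
    · -- m = -2 : α = -1
      have h1 : (α + 1) ^ 2 = 0 := by push_cast at hquad ⊢; linear_combination hquad
      have h2 : α = -1 := by
        have := pow_eq_zero_iff (n := 2) (by norm_num) |>.mp h1
        linear_combination this
      rw [h2]; norm_num
    · have h3 : α ^ 3 = 1 := by push_cast at hquad; linear_combination (α - 1) * hquad
      calc α ^ 12 = (α ^ 3) ^ 4 := by ring
      _ = 1 := by rw [h3]; norm_num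
    · have h2 : α ^ 2 = -1 := by push_cast at hquad; linear_combination hquad
      calc α ^ 12 = (α ^ 2) ^ 6 := by ring
      _ = 1 := by rw [h2]; norm_num
    · have h3 : α ^ 3 = -1 := by push_cast at hquad; linear_combination (α + 1) * hquad
      calc α ^ 12 = (α ^ 3) ^ 4 := by ring
      _ = 1 := by rw [h3]; norm_num
    · have h1 : (α - 1) ^ 2 = 0 := by push_cast at hquad ⊢; linear_combination hquad
      have h2 : α = 1 := by
        have := pow_eq_zero_iff (n := 2) (by norm_num) |>.mp h1
        linear_combination this
      rw [h2]; norm_num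
  -- conclude
  have h24 : β ^ 24 = (q : ℂ) ^ 12 := by
    have h1 := hα12
    rw [hα, div_pow, ← pow_mul, div_eq_one_iff_eq (pow_ne_zero _ hqC)] at h1
    rw [show (24 : ℕ) = 2 * 12 by norm_num, h1]
  have hsplit : (β ^ 12 - (q : ℂ) ^ 6) * (β ^ 12 + (q : ℂ) ^ 6) = 0 := by
    linear_combination h24
  rcases mul_eq_zero.mp hsplit with h1 | h1
  · have h2 : β ^ 12 = (q : ℂ) ^ 6 := by linear_combination h1
    exact ⟨⟨(q : ℤ) ^ 6, by rw [h2]; push_cast; ring⟩, Or.inl h2⟩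
  · have h2 : β ^ 12 = -(q : ℂ) ^ 6 := by linear_combination h1
    exact ⟨⟨-(q : ℤ) ^ 6, by rw [h2]; push_cast; ring⟩, Or.inr h2⟩
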